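/- arXiv:2305.15548 — 2 statements merged into one kernel-verified Lean document; each statement's English description precedes it below -/
import Mathlib

section
/- Let f(z) = h(z) + conj(g(z)) be a complex-valued harmonic polynomial, where h and g are complex polynomials with deg h = n > m = deg g, and suppose f(z) tends to infinity in modulus as |z| tends to infinity. Then f has at most n^2 zeros; that is, the set {z ∈ ℂ : h(z) + conj(g(z)) = 0} is finite with cardinality at most n^2. -/
open Polynomial Filter Matrix

/-- The Sylvester-type matrix built from two coefficient sequences. -/
noncomputable def sylMat {R : Type*} [CommRing R] (n m : ℕ) (a b : ℕ → R) :
    Matrix (Fin (n+m)) (Fin (n+m)) R :=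
  Matrix.of fun i j => if (i:ℕ) < n then (if (i:ℕ) ≤ (j:ℕ) then a ((j:ℕ) - (i:ℕ)) else 0)
    else (if (i:ℕ) - n ≤ (j:ℕ) then b ((j:ℕ) - ((i:ℕ) - n)) else 0)

lemma sylMat_map {R S : Type*} [CommRing R] [CommRing S] (f : R →+* S)
    (n m : ℕ) (a b : ℕ → R) :
    (sylMat n m a b).map f = sylMat n m (fun k => f (a k)) (fun k => f (b k)) := by
  ext i j
  simp only [sylMat, Matrix.map_apply, Matrix.of_apply]
  split_ifs <;> simp

/-- Upper bound `‖p.eval z‖ ≤ C * ‖z‖^d` for `‖z‖ ≥ 1`, `d ≥ natDegree p`. -/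
lemma eval_norm_le (p : Polynomial ℂ) (d : ℕ) (hd : p.natDegree ≤ d) (z : ℂ) (hz : 1 ≤ ‖z‖) :
    ‖p.eval z‖ ≤ (∑ i ∈ Finset.range (p.natDegree + 1), ‖p.coeff i‖) * ‖z‖ ^ d := by
  rw [Polynomial.eval_eq_sum_range, Finset.sum_mul]
  refine (norm_sum_le _ _).trans (Finset.sum_le_sum fun i hi => ?_)
  rw [norm_mul, norm_pow]
  refine mul_le_mul_of_nonneg_left ?_ (norm_nonneg _)
  exact pow_le_pow_right₀ hz (le_trans (Nat.le_of_lt_succ (Finset.mem_range.mp hi)) hd)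

/-- If `natDegree q < natDegree p` then `‖q.eval z‖ < ‖p.eval z‖` for `‖z‖` large. -/
lemma exists_norm_eval_lt (p q : Polynomial ℂ) (hp : p ≠ 0) (hlt : q.natDegree < p.natDegree) :
    ∃ r : ℝ, ∀ z : ℂ, r ≤ ‖z‖ → ‖q.eval z‖ < ‖p.eval z‖ := by
  set n := p.natDegree with hn
  have hn1 : 1 ≤ n := Nat.one_le_iff_ne_zero.mpr (by omega)
  set k := n - 1 with hk
  have hnk : n = k + 1 := by omega
  set C1 := ∑ i ∈ Finset.range (p.eraseLead.natDegree + 1), ‖p.eraseLead.coeff i‖ with hC1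
  set C2 := ∑ i ∈ Finset.range (q.natDegree + 1), ‖q.coeff i‖ with hC2
  have hlc : 0 < ‖p.leadingCoeff‖ := by
    simpa using (norm_pos_iff).mpr (Polynomial.leadingCoeff_ne_zero.mpr hp)
  refine ⟨max 1 ((C1 + C2 + 1) / ‖p.leadingCoeff‖), fun z hz => ?_⟩
  have hz1 : 1 ≤ ‖z‖ := le_trans (le_max_left _ _) hz
  have hz2 : C1 + C2 + 1 ≤ ‖p.leadingCoeff‖ * ‖z‖ := by
    rw [← div_le_iff₀' hlc]
    exact le_trans (le_max_right _ _) hz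
  have hzk : (1:ℝ) ≤ ‖z‖ ^ k := one_le_pow₀ hz1
  have hzk0 : (0:ℝ) ≤ ‖z‖ ^ k := by positivity
  have hsplit : p.eval z = p.eraseLead.eval z + p.leadingCoeff * z ^ n := by
    conv_lhs => rw [← Polynomial.eraseLead_add_C_mul_X_pow p]
    simp [← hn]
  have h1 : ‖p.eraseLead.eval z‖ ≤ C1 * ‖z‖ ^ k := by
    refine eval_norm_le _ k ?_ z hz1
    exact le_trans (Polynomial.eraseLead_natDegree_le p) (by omega)
  have h2 : ‖q.eval z‖ ≤ C2 * ‖z‖ ^ k := by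
    refine eval_norm_le _ k (by omega) z hz1
  have hmain : ‖p.leadingCoeff * z ^ n‖ ≥ (C1 + C2 + 1) * ‖z‖ ^ k := by
    rw [norm_mul, norm_pow, hnk, pow_succ, ← mul_assoc]
    calc (C1 + C2 + 1) * ‖z‖ ^ k ≤ (‖p.leadingCoeff‖ * ‖z‖) * ‖z‖ ^ k := by
          exact mul_le_mul_of_nonneg_right hz2 hzk0
      _ = ‖p.leadingCoeff‖ * ‖z‖ ^ k * ‖z‖ := by ring
  have hpz : (C1 + C2 + 1) * ‖z‖ ^ k - C1 * ‖z‖ ^ k ≤ ‖p.eval z‖ := by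
    have := norm_sub_norm_le (p.leadingCoeff * z ^ n) (-(p.eraseLead.eval z))
    rw [hsplit]
    have heq : p.eraseLead.eval z + p.leadingCoeff * z ^ n
        = p.leadingCoeff * z ^ n - -(p.eraseLead.eval z) := by ring
    rw [heq]
    refine le_trans ?_ this
    rw [norm_neg]
    nlinarith [h1, hmain]
  have : C2 * ‖z‖ ^ k < (C1 + C2 + 1) * ‖z‖ ^ k - C1 * ‖z‖ ^ k := by nlinarith
  linarith [h2]

/-- Row sums of the Sylvester matrix against powers of `w`. -/
lemma sum_shift (A : Polynomial ℂ) (i N : ℕ) (hN : A.natDegree + i < N) (w : ℂ) :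
    ∑ j ∈ Finset.range N, (if i ≤ j then A.coeff (j - i) else 0) * w ^ j
      = w ^ i * A.eval w := by
  have hiN : i ≤ N := by omega
  have h1 : ∀ j ∈ Finset.range N, (if i ≤ j then A.coeff (j - i) else 0) * w ^ j
      = if j ∈ Finset.Ico i N then A.coeff (j - i) * w ^ j else 0 := by
    intro j hj
    rw [Finset.mem_range] at hj
    by_cases hij : i ≤ j <;> simp [hij, Finset.mem_Ico, hj]
  rw [Finset.sum_congr rfl h1, Finset.sum_ite_mem, Finset.range_eq_Ico]
  have h2 : Finset.Ico 0 N ∩ Finset.Ico i N = Finset.Ico i N := by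
    apply Finset.inter_eq_right.mpr
    intro x hx
    rw [Finset.mem_Ico] at *
    omega
  rw [h2, Finset.sum_Ico_eq_sum_range]
  have hev : A.eval w = ∑ k ∈ Finset.range (N - i), A.coeff k * w ^ k :=
    Polynomial.eval_eq_sum_range' (by omega) w
  rw [hev, Finset.mul_sum]
  refine Finset.sum_congr rfl fun k _ => ?_
  have h3 : i + k - i = k := by omega
  rw [h3, pow_add]
  ring

/-- If `A` and `B` have a common root then the Sylvester determinant vanishes. -/
lemma sylMat_det_eq_zero (n m : ℕ) (hnm : 0 < n + m) (A B : Polynomial ℂ)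
    (hA : A.natDegree ≤ m) (hB : B.natDegree ≤ n) (w : ℂ)
    (hAw : A.eval w = 0) (hBw : B.eval w = 0) :
    (sylMat n m A.coeff B.coeff).det = 0 := by
  rw [← Matrix.exists_mulVec_eq_zero_iff]
  refine ⟨fun j => w ^ (j:ℕ), ?_, ?_⟩
  · intro hzero
    have := congrFun hzero ⟨0, hnm⟩
    simp at this
  · funext i
    show ∑ j, sylMat n m A.coeff B.coeff i j * w ^ (j:ℕ) = 0
    by_cases hi : (i:ℕ) < n
    · have : ∑ j, sylMat n m A.coeff B.coeff i j * w ^ (j:ℕ)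
          = ∑ j ∈ Finset.range (n+m), (if (i:ℕ) ≤ j then A.coeff (j - i) else 0) * w ^ j := by
        rw [← Fin.sum_univ_eq_sum_range]
        exact Finset.sum_congr rfl fun j _ => by simp [sylMat, hi]
      rw [this, sum_shift A i (n+m) (by omega) w, hAw, mul_zero]
    · have : ∑ j, sylMat n m A.coeff B.coeff i j * w ^ (j:ℕ)
          = ∑ j ∈ Finset.range (n+m),
              (if (i:ℕ) - n ≤ j then B.coeff (j - ((i:ℕ) - n)) else 0) * w ^ j := by
        rw [← Fin.sum_univ_eq_sum_range]
        exact Finset.sum_congr rfl fun j _ => by simp [sylMat, hi]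
      have hin : (i:ℕ) - n < m := by omega
      rw [this, sum_shift B ((i:ℕ) - n) (n+m) (by omega) w, hBw, mul_zero]

lemma coeff_mul_eq_range_sum (p A : Polynomial ℂ) (N t : ℕ)
    (hcoeff : ∀ i, N ≤ i → p.coeff i = 0) :
    (p * A).coeff t
      = ∑ i ∈ Finset.range N, p.coeff i * (if i ≤ t then A.coeff (t - i) else 0) := by
  rw [Polynomial.coeff_mul, Finset.Nat.sum_antidiagonal_eq_sum_range_succ_mk]
  have h1 : ∀ i ∈ Finset.range (t+1), p.coeff i * A.coeff (t - i)
      = p.coeff i * (if i ≤ t then A.coeff (t - i) else 0) := by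
    intro i hi
    rw [Finset.mem_range] at hi
    rw [if_pos (by omega)]
  rw [Finset.sum_congr rfl h1]
  set F : ℕ → ℂ := fun i => p.coeff i * (if i ≤ t then A.coeff (t - i) else 0) with hF
  have e1 : ∑ i ∈ Finset.range (t+1), F i = ∑ i ∈ Finset.range (max (t+1) N), F i := by
    refine Finset.sum_subset (Finset.range_subset_range.mpr (le_max_left _ _)) ?_
    intro i hi hni
    rw [Finset.mem_range] at hi hni
    rw [hF]
    simp only
    rw [if_neg (by omega), mul_zero]
  have e2 : ∑ i ∈ Finset.range N, F i = ∑ i ∈ Finset.range (max (t+1) N), F i := by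
    refine Finset.sum_subset (Finset.range_subset_range.mpr (le_max_right _ _)) ?_
    intro i hi hni
    rw [Finset.mem_range] at hni
    rw [hF]
    simp only
    rw [hcoeff i (by omega), zero_mul]
  rw [e1, ← e2]

/-- If `A` and `B` have no common root (and suitable degrees) then the Sylvester
determinant does not vanish. -/
lemma sylMat_det_ne_zero (n m : ℕ) (hn : 0 < n) (hm : 0 < m) (A B : Polynomial ℂ)
    (hA0 : A ≠ 0) (hAm : A.natDegree ≤ m) (hBn : B.natDegree = n)
    (hroot : ∀ w : ℂ, A.eval w = 0 → B.eval w ≠ 0) :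
    (sylMat n m A.coeff B.coeff).det ≠ 0 := by
  intro hdet
  obtain ⟨c, hc0, hc⟩ := (Matrix.exists_vecMul_eq_zero_iff).mpr hdet
  set c' : ℕ → ℂ := fun i => if hi : i < n + m then c ⟨i, hi⟩ else 0 with hc'
  set p : Polynomial ℂ := ∑ i ∈ Finset.range n, monomial i (c' i) with hp
  set q : Polynomial ℂ := ∑ k ∈ Finset.range m, monomial k (c' (n + k)) with hq
  have hB0 : B ≠ 0 := fun hB => by rw [hB] at hBn; simp at hBn; omega
  have hpcoeff : ∀ t, p.coeff t = if t < n then c' t else 0 := by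
    intro t
    rw [hp, Polynomial.finset_sum_coeff]
    simp only [Polynomial.coeff_monomial]
    rw [Finset.sum_ite_eq' (Finset.range n) t (fun i => c' i)]
    simp [Finset.mem_range]
  have hqcoeff : ∀ t, q.coeff t = if t < m then c' (n + t) else 0 := by
    intro t
    rw [hq, Polynomial.finset_sum_coeff]
    simp only [Polynomial.coeff_monomial]
    rw [Finset.sum_ite_eq' (Finset.range m) t (fun k => c' (n + k))]
    simp [Finset.mem_range]
  have hpdeg : p.natDegree ≤ n - 1 :=
    Polynomial.natDegree_sum_le_of_forall_le _ _ fun i hi =>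
      (Polynomial.natDegree_monomial_le _).trans (by rw [Finset.mem_range] at hi; omega)
  have hqdeg : q.natDegree ≤ m - 1 :=
    Polynomial.natDegree_sum_le_of_forall_le _ _ fun k hk =>
      (Polynomial.natDegree_monomial_le _).trans (by rw [Finset.mem_range] at hk; omega)
  have hrel : p * A + q * B = 0 := by
    ext t
    rw [Polynomial.coeff_add, Polynomial.coeff_zero]
    by_cases ht : t < n + m
    · have hPA : (p * A).coeff t
          = ∑ i ∈ Finset.range n, c' i * (if i ≤ t then A.coeff (t - i) else 0) := by
        rw [coeff_mul_eq_range_sum p A n t (fun i hi => by rw [hpcoeff]; rw [if_neg (by omega)])]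
        refine Finset.sum_congr rfl fun i hi => ?_
        rw [Finset.mem_range] at hi
        rw [hpcoeff, if_pos hi]
      have hQB : (q * B).coeff t
          = ∑ k ∈ Finset.range m, c' (n + k) * (if k ≤ t then B.coeff (t - k) else 0) := by
        rw [coeff_mul_eq_range_sum q B m t (fun k hk => by rw [hqcoeff]; rw [if_neg (by omega)])]
        refine Finset.sum_congr rfl fun k hk => ?_
        rw [Finset.mem_range] at hk
        rw [hqcoeff, if_pos hk]
      have hcol := congrFun hc ⟨t, ht⟩
      have hcol' : ∑ i : Fin (n+m), c i * sylMat n m A.coeff B.coeff i ⟨t, ht⟩ = 0 := by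
        simpa [Matrix.vecMul, dotProduct] using hcol
      set f : ℕ → ℂ := fun i => c' i *
        (if i < n then (if i ≤ t then A.coeff (t - i) else 0)
          else (if i - n ≤ t then B.coeff (t - (i - n)) else 0)) with hf
      have hcol'' : ∑ i ∈ Finset.range (n+m), f i = 0 := by
        rw [← Fin.sum_univ_eq_sum_range]
        rw [← hcol']
        refine Finset.sum_congr rfl fun i _ => ?_
        rw [hf]
        simp only
        have hci : c' (i : ℕ) = c i := by simp [hc']
        rw [hci]
        rfl
      have hsplit : ∑ i ∈ Finset.range (n+m), f i
          = (∑ i ∈ Finset.range n, f i) + ∑ k ∈ Finset.range m, f (n + k) := by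
        rw [Finset.range_eq_Ico, ← Finset.sum_Ico_consecutive _ (Nat.zero_le n) (by omega)]
        congr 1
        rw [Finset.sum_Ico_eq_sum_range]
        simp
        rw [Finset.sum_Ico_eq_sum_range]
        simp
      have hfa : ∀ i ∈ Finset.range n, f i = c' i * (if i ≤ t then A.coeff (t - i) else 0) := by
        intro i hi
        rw [Finset.mem_range] at hi
        rw [hf]
        simp only
        rw [if_pos hi]
      have hfb : ∀ k ∈ Finset.range m,
          f (n + k) = c' (n + k) * (if k ≤ t then B.coeff (t - k) else 0) := by
        intro k hk
        rw [hf]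
        simp only
        rw [if_neg (by omega)]
        have : n + k - n = k := by omega
        rw [this]
      rw [hPA, hQB, ← Finset.sum_congr rfl hfa, ← Finset.sum_congr rfl hfb, ← hsplit, hcol'']
    · have h1 : (p * A).coeff t = 0 := by
        refine Polynomial.coeff_eq_zero_of_natDegree_lt ?_
        calc (p * A).natDegree ≤ p.natDegree + A.natDegree := Polynomial.natDegree_mul_le
          _ < n + m := by omega
          _ ≤ t := by omega
      have h2 : (q * B).coeff t = 0 := by
        refine Polynomial.coeff_eq_zero_of_natDegree_lt ?_
        calc (q * B).natDegree ≤ q.natDegree + B.natDegree := Polynomial.natDegree_mul_le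
          _ < n + m := by omega
          _ ≤ t := by omega
      rw [h1, h2, add_zero]
  have hcop : IsCoprime A B := by
    rw [← EuclideanDomain.gcd_isUnit_iff]
    set d := EuclideanDomain.gcd A B with hd
    have hd0 : d ≠ 0 := fun hd0 => hA0 ((EuclideanDomain.gcd_eq_zero_iff).mp hd0).1
    have hddeg : d.degree ≤ 0 := by
      by_contra hdeg
      push_neg at hdeg
      obtain ⟨w, hw⟩ := Complex.exists_root hdeg
      have hwA : A.eval w = 0 := Polynomial.IsRoot.dvd hw (EuclideanDomain.gcd_dvd_left A B)
      have hwB : B.eval w = 0 := Polynomial.IsRoot.dvd hw (EuclideanDomain.gcd_dvd_right A B)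
      exact hroot w hwA hwB
    exact Polynomial.isUnit_iff_degree_eq_zero.mpr
      (le_antisymm hddeg (Polynomial.zero_le_degree_iff.mpr hd0))
  have hczero : p = 0 → q = 0 → False := by
    intro hp0 hq0
    apply hc0
    funext i
    by_cases hi : (i:ℕ) < n
    · have := hpcoeff (i : ℕ)
      rw [hp0, Polynomial.coeff_zero, if_pos hi] at this
      have hci : c' (i : ℕ) = c i := by simp [hc']
      rw [← hci, ← this]
      rfl
    · have hkm : (i:ℕ) - n < m := by omega
      have := hqcoeff ((i:ℕ) - n)
      rw [hq0, Polynomial.coeff_zero, if_pos hkm] at this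
      have hni : n + ((i:ℕ) - n) = (i:ℕ) := by omega
      rw [hni] at this
      have hci : c' (i : ℕ) = c i := by simp [hc']
      rw [← hci, ← this]
      rfl
  by_cases hp0 : p = 0
  · have hq0 : q * B = 0 := by rw [hp0, zero_mul, zero_add] at hrel; exact hrel
    exact hczero hp0 ((mul_eq_zero.mp hq0).resolve_right hB0)
  · have hdvd : B ∣ p * A := ⟨-q, by linear_combination hrel⟩
    have hBp : B ∣ p := (hcop.symm).dvd_of_dvd_mul_right hdvd
    have := Polynomial.natDegree_le_of_dvd hBp hp0
    omega

/-- Degree bound for the Sylvester determinant over `ℂ[X]`. -/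
lemma sylMat_det_natDegree_le (n m : ℕ) (hmn : m ≤ n) (a b : ℕ → Polynomial ℂ)
    (ha0 : (a 0).natDegree ≤ n) (ha : ∀ k, 1 ≤ k → (a k).natDegree = 0)
    (ha' : ∀ k, m < k → a k = 0)
    (hb0 : (b 0).natDegree ≤ m) (hb : ∀ k, 1 ≤ k → (b k).natDegree = 0)
    (hb' : ∀ k, n < k → b k = 0) :
    (sylMat n m a b).det.natDegree ≤ n ^ 2 := by
  set M := sylMat n m a b with hM
  set w : Fin (n+m) → ℕ := fun r => if (r:ℕ) < n then n + (r:ℕ) else (r:ℕ) with hw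
  have hentry : ∀ r j : Fin (n+m), M r j ≠ 0 → (M r j).natDegree + (j:ℕ) ≤ w r := by
    intro r j hne
    rw [hM] at hne ⊢
    by_cases hr : (r:ℕ) < n
    · have hent : sylMat n m a b r j = if (r:ℕ) ≤ (j:ℕ) then a ((j:ℕ) - (r:ℕ)) else 0 := by
        simp [sylMat, hr]
      rw [hent] at hne ⊢
      by_cases hrj : (r:ℕ) ≤ (j:ℕ)
      · rw [if_pos hrj] at hne ⊢
        have hjm : (j:ℕ) - (r:ℕ) ≤ m := by
          by_contra hgt
          exact hne (ha' _ (by omega))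
        by_cases hjr : (j:ℕ) = (r:ℕ)
        · rw [hjr]
          simp only [Nat.sub_self]
          rw [hw]
          simp only [if_pos hr]
          omega
        · have h1 : 1 ≤ (j:ℕ) - (r:ℕ) := by omega
          rw [ha _ h1, hw]
          simp only [if_pos hr]
          omega
      · exact (hne (if_neg hrj)).elim
    · have hent : sylMat n m a b r j
          = if (r:ℕ) - n ≤ (j:ℕ) then b ((j:ℕ) - ((r:ℕ) - n)) else 0 := by
        simp [sylMat, hr]
      rw [hent] at hne ⊢
      by_cases hrj : (r:ℕ) - n ≤ (j:ℕ)
      · rw [if_pos hrj] at hne ⊢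
        have hjn : (j:ℕ) - ((r:ℕ) - n) ≤ n := by
          by_contra hgt
          exact hne (hb' _ (by omega))
        by_cases hjr : (j:ℕ) = (r:ℕ) - n
        · rw [hjr]
          simp only [Nat.sub_self]
          rw [hw]
          simp only [if_neg hr]
          omega
        · have h1 : 1 ≤ (j:ℕ) - ((r:ℕ) - n) := by omega
          rw [hb _ h1, hw]
          simp only [if_neg hr]
          omega
      · exact (hne (if_neg hrj)).elim
  have hwsum : ∑ r : Fin (n+m), w r = n * n + ∑ j : Fin (n+m), (j:ℕ) := by
    rw [hw]
    have : ∀ r : Fin (n+m), (if (r:ℕ) < n then n + (r:ℕ) else (r:ℕ))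
        = (if (r:ℕ) < n then n else 0) + (r:ℕ) := by
      intro r; by_cases hr : (r:ℕ) < n <;> simp [hr]
    rw [Finset.sum_congr rfl fun r _ => this r, Finset.sum_add_distrib]
    congr 1
    rw [Fin.sum_univ_eq_sum_range (fun i => if i < n then n else 0) (n+m)]
    rw [← Finset.sum_subset (Finset.range_subset_range.mpr (by omega : n ≤ n + m))
      (fun x _ hx => by rw [Finset.mem_range] at hx; rw [if_neg (by omega)])]
    have : ∀ i ∈ Finset.range n, (if i < n then n else 0) = n := by
      intro i hi
      rw [Finset.mem_range] at hi
      rw [if_pos hi]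
    rw [Finset.sum_congr rfl this, Finset.sum_const, Finset.card_range, smul_eq_mul]
  rw [Matrix.det_apply]
  refine Polynomial.natDegree_sum_le_of_forall_le _ _ fun σ _ => ?_
  have hsmul : (Equiv.Perm.sign σ • ∏ i, M (σ i) i).natDegree
      ≤ (∏ i, M (σ i) i).natDegree := by
    rcases Int.units_eq_one_or (Equiv.Perm.sign σ) with hs | hs <;> rw [hs] <;> simp
  refine hsmul.trans ?_
  by_cases hzero : ∃ j, M (σ j) j = 0
  · obtain ⟨j, hj⟩ := hzero
    have hz : (∏ i, M (σ i) i) = 0 := Finset.prod_eq_zero (Finset.mem_univ j) hj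
    rw [hz]
    simp
  · push_neg at hzero
    have h1 : (∏ i, M (σ i) i).natDegree ≤ ∑ j, (M (σ j) j).natDegree :=
      Polynomial.natDegree_prod_le _ _
    refine h1.trans ?_
    have h2 : ∑ j, ((M (σ j) j).natDegree + (j:ℕ)) ≤ ∑ j, w (σ j) :=
      Finset.sum_le_sum fun j _ => hentry (σ j) j (hzero j)
    rw [Finset.sum_add_distrib] at h2
    rw [Equiv.sum_comp σ w, hwsum] at h2
    have h3 := Nat.le_of_add_le_add_right h2
    have hnn : n ^ 2 = n * n := by ring
    omega

/-- Wilmshurst's theorem: if `f(z) = h(z) + conj (g z)` with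
`deg h = n > m = deg g` and `|f(z)| → ∞` as `|z| → ∞`, then `f` has at most
`n ^ 2` zeros. -/
theorem stmt_13 (h g : Polynomial ℂ) (n m : ℕ)
    (hn : h.natDegree = n) (hm : g.natDegree = m) (hnm : n > m)
    (hinf : Filter.Tendsto (fun z : ℂ => ‖h.eval z + starRingEnd ℂ (g.eval z)‖)
      (Bornology.cobounded ℂ) Filter.atTop) :
    {z : ℂ | h.eval z + starRingEnd ℂ (g.eval z) = 0}.Finite ∧
      {z : ℂ | h.eval z + starRingEnd ℂ (g.eval z) = 0}.ncard ≤ n ^ 2 := by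
  classical
  set φ := starRingEnd ℂ with hφ
  set S := {z : ℂ | h.eval z + φ (g.eval z) = 0} with hS
  have hn1 : 1 ≤ n := by omega
  have hh0 : h ≠ 0 := fun h0 => by rw [h0] at hn; simp at hn; omega
  -- reduce to finding one polynomial vanishing on S
  suffices hexists : ∃ R : Polynomial ℂ, R ≠ 0 ∧ R.natDegree ≤ n ^ 2 ∧ ∀ z ∈ S, R.eval z = 0 by
    obtain ⟨R, hR0, hRdeg, hRroot⟩ := hexists
    have hsub : S ⊆ ↑R.roots.toFinset := by
      intro z hz
      simp only [Multiset.mem_toFinset, Finset.coe_sort_coe, Finset.mem_coe]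
      rw [Polynomial.mem_roots hR0]
      exact hRroot z hz
    have hfin : S.Finite := Set.Finite.subset (R.roots.toFinset : Finset ℂ).finite_toSet hsub
    refine ⟨hfin, ?_⟩
    calc S.ncard ≤ (↑R.roots.toFinset : Set ℂ).ncard :=
          Set.ncard_le_ncard hsub (R.roots.toFinset : Finset ℂ).finite_toSet
      _ = R.roots.toFinset.card := Set.ncard_coe_finset _
      _ ≤ Multiset.card R.roots := Multiset.toFinset_card_le _
      _ ≤ R.natDegree := Polynomial.card_roots' R
      _ ≤ n ^ 2 := hRdeg
  by_cases hm0 : m = 0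
  · -- co-analytic part is constant
    obtain ⟨a, ha⟩ := Polynomial.natDegree_eq_zero.mp (hm.trans hm0)
    refine ⟨h + C (φ a), ?_, ?_, ?_⟩
    · intro h0
      have hc : (h + C (φ a)).coeff n = h.coeff n := by
        rw [Polynomial.coeff_add, Polynomial.coeff_C, if_neg (by omega), add_zero]
      rw [h0, Polynomial.coeff_zero] at hc
      have : h.coeff n ≠ 0 := by
        rw [← hn]
        exact Polynomial.leadingCoeff_ne_zero.mpr hh0
      exact this hc.symm
    · refine (Polynomial.natDegree_add_le _ _).trans ?_
      simp only [Polynomial.natDegree_C, hn]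
      calc max n 0 = n := by omega
        _ ≤ n ^ 2 := Nat.le_self_pow (by norm_num) n
    · intro z hz
      rw [hS] at hz
      simp only [Set.mem_setOf_eq] at hz
      rw [Polynomial.eval_add, Polynomial.eval_C]
      rw [← ha] at hz
      simpa using hz
  · -- main case : m ≥ 1
    have hm1 : 1 ≤ m := by omega
    set gc : Polynomial ℂ := g.map φ with hgc
    set hc : Polynomial ℂ := h.map φ with hhc
    have hgcdeg : gc.natDegree = m := by rw [hgc, Polynomial.natDegree_map, hm]
    have hhcdeg : hc.natDegree = n := by rw [hhc, Polynomial.natDegree_map, hn]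
    have hg0 : g ≠ 0 := fun h0 => by rw [h0] at hm; simp at hm; omega
    have hgc0 : gc ≠ 0 := fun h0 => by rw [h0] at hgcdeg; simp at hgcdeg; omega
    have hhc0 : hc ≠ 0 := fun h0 => by rw [h0] at hhcdeg; simp at hhcdeg; omega
    have hconj_eval : ∀ (p : Polynomial ℂ) (z : ℂ), (p.map φ).eval (φ z) = φ (p.eval z) := by
      intro p z
      rw [Polynomial.eval_map, Polynomial.eval₂_hom]
    -- coefficient sequences over ℂ[X]
    set Ac : ℕ → Polynomial ℂ := fun k => (if k = 0 then h else 0) + C (gc.coeff k) with hAc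
    set Bc : ℕ → Polynomial ℂ := fun k => (if k = 0 then g else 0) + C (hc.coeff k) with hBc
    set R : Polynomial ℂ := (sylMat n m Ac Bc).det with hR
    -- evaluation of R
    have hReval : ∀ z : ℂ, R.eval z
        = (sylMat n m (gc + C (h.eval z)).coeff (hc + C (g.eval z)).coeff).det := by
      intro z
      rw [hR]
      have := RingHom.map_det (Polynomial.evalRingHom z) (sylMat n m Ac Bc)
      rw [show (Polynomial.evalRingHom z) (sylMat n m Ac Bc).det
          = Polynomial.eval z (sylMat n m Ac Bc).det from rfl] at this
      have hAeq : (fun k => (Polynomial.evalRingHom z) (Ac k)) = (gc + C (h.eval z)).coeff := by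
        funext k
        simp only [hAc, Polynomial.coeff_add, Polynomial.coeff_C]
        rw [show (Polynomial.evalRingHom z) ((if k = 0 then h else 0) + C (gc.coeff k))
            = Polynomial.eval z ((if k = 0 then h else 0) + C (gc.coeff k)) from rfl]
        rw [Polynomial.eval_add, Polynomial.eval_C]
        by_cases hk : k = 0 <;> simp [hk, add_comm]
      have hBeq : (fun k => (Polynomial.evalRingHom z) (Bc k)) = (hc + C (g.eval z)).coeff := by
        funext k
        simp only [hBc, Polynomial.coeff_add, Polynomial.coeff_C]
        rw [show (Polynomial.evalRingHom z) ((if k = 0 then g else 0) + C (hc.coeff k))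
            = Polynomial.eval z ((if k = 0 then g else 0) + C (hc.coeff k)) from rfl]
        rw [Polynomial.eval_add, Polynomial.eval_C]
        by_cases hk : k = 0 <;> simp [hk, add_comm]
      rw [this, RingHom.mapMatrix_apply, sylMat_map, hAeq, hBeq]
    refine ⟨R, ?_, ?_, ?_⟩
    · -- R ≠ 0 : find a point z₀ with R.eval z₀ ≠ 0
      obtain ⟨r₁, hr₁⟩ := exists_norm_eval_lt h g hh0 (by omega)
      obtain ⟨r₂, hr₂⟩ := exists_norm_eval_lt hc gc hhc0 (by omega)
      obtain ⟨Cb, hCb⟩ : ∃ Cb : ℝ, ∀ w ∈ Metric.closedBall (0:ℂ) (max r₂ 0), ‖hc.eval w‖ ≤ Cb :=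
        (isCompact_closedBall (0:ℂ) (max r₂ 0)).exists_bound_of_continuousOn
          (Polynomial.continuous _).continuousOn
      have hgdeg : 0 < g.degree := by
        rw [← Polynomial.natDegree_pos_iff_degree_pos, hm]; omega
      have ev1 : ∀ᶠ z in Bornology.cobounded ℂ, r₁ ≤ ‖z‖ :=
        tendsto_norm_cobounded_atTop.eventually_ge_atTop r₁
      have ev2 : ∀ᶠ z in Bornology.cobounded ℂ, Cb < ‖g.eval z‖ :=
        (Polynomial.tendsto_norm_atTop g hgdeg tendsto_norm_cobounded_atTop).eventually_gt_atTop Cb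
      obtain ⟨z₀, hz1, hz2⟩ := (ev1.and ev2).exists
      intro hR0
      have hRz : R.eval z₀ = 0 := by rw [hR0]; simp
      rw [hReval z₀] at hRz
      refine sylMat_det_ne_zero n m (by omega) (by omega)
        (gc + C (h.eval z₀)) (hc + C (g.eval z₀)) ?_ ?_ ?_ ?_ hRz
      · -- A ≠ 0
        intro h0
        have : (gc + C (h.eval z₀)).coeff m = gc.coeff m := by
          rw [Polynomial.coeff_add, Polynomial.coeff_C, if_neg (by omega), add_zero]
        rw [h0, Polynomial.coeff_zero] at this
        have hlc : gc.leadingCoeff = 0 := by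
          rw [Polynomial.leadingCoeff, hgcdeg]
          exact this.symm
        exact (Polynomial.leadingCoeff_ne_zero.mpr hgc0) hlc
      · refine (Polynomial.natDegree_add_le _ _).trans ?_
        simp [hgcdeg]
      · -- natDegree B = n
        refine le_antisymm ((Polynomial.natDegree_add_le _ _).trans (by simp [hhcdeg])) ?_
        refine Polynomial.le_natDegree_of_ne_zero ?_
        rw [Polynomial.coeff_add, Polynomial.coeff_C, if_neg (by omega), add_zero]
        rw [← hhcdeg, ← Polynomial.leadingCoeff]
        exact Polynomial.leadingCoeff_ne_zero.mpr hhc0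
      · -- no common root
        intro w hAw hBw
        rw [Polynomial.eval_add, Polynomial.eval_C] at hAw hBw
        have e1 : gc.eval w = -(h.eval z₀) := by linear_combination hAw
        have e2 : hc.eval w = -(g.eval z₀) := by linear_combination hBw
        have hnB : ‖hc.eval w‖ = ‖g.eval z₀‖ := by rw [e2, norm_neg]
        have hnA : ‖gc.eval w‖ = ‖h.eval z₀‖ := by rw [e1, norm_neg]
        have hw2 : r₂ ≤ ‖w‖ := by
          by_contra hlt
          push_neg at hlt
          have hwball : w ∈ Metric.closedBall (0:ℂ) (max r₂ 0) := by
            simp only [Metric.mem_closedBall, dist_zero_right]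
            exact le_trans hlt.le (le_max_left _ _)
          have := hCb w hwball
          rw [hnB] at this
          linarith
        have c1 : ‖gc.eval w‖ < ‖hc.eval w‖ := hr₂ w hw2
        have c2 : ‖g.eval z₀‖ < ‖h.eval z₀‖ := hr₁ z₀ hz1
        rw [hnA, hnB] at c1
        linarith
    · -- degree bound
      rw [hR]
      refine sylMat_det_natDegree_le n m (by omega) Ac Bc ?_ ?_ ?_ ?_ ?_ ?_
      · rw [hAc]
        simp only [if_pos rfl]
        refine (Polynomial.natDegree_add_le _ _).trans ?_
        simp [hn]
      · intro k hk
        rw [hAc]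
        simp only [if_neg (by omega : ¬ k = 0), zero_add]
        exact Polynomial.natDegree_C _
      · intro k hk
        rw [hAc]
        simp only [if_neg (by omega : ¬ k = 0), zero_add]
        rw [Polynomial.coeff_eq_zero_of_natDegree_lt (by omega : gc.natDegree < k)]
        exact Polynomial.C_0
      · rw [hBc]
        simp only [if_pos rfl]
        refine (Polynomial.natDegree_add_le _ _).trans ?_
        simp [hm]
      · intro k hk
        rw [hBc]
        simp only [if_neg (by omega : ¬ k = 0), zero_add]
        exact Polynomial.natDegree_C _
      · intro k hk
        rw [hBc]
        simp only [if_neg (by omega : ¬ k = 0), zero_add]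
        rw [Polynomial.coeff_eq_zero_of_natDegree_lt (by omega : hc.natDegree < k)]
        exact Polynomial.C_0
    · -- vanishing on S
      intro z hz
      rw [hS] at hz
      simp only [Set.mem_setOf_eq] at hz
      rw [hReval z]
      set w : ℂ := φ z with hw
      have hAw : (gc + C (h.eval z)).eval w = 0 := by
        rw [Polynomial.eval_add, Polynomial.eval_C, hgc, hw, hconj_eval g z]
        linear_combination hz
      have hBw : (hc + C (g.eval z)).eval w = 0 := by
        rw [Polynomial.eval_add, Polynomial.eval_C, hhc, hw, hconj_eval h z]
        have : φ (h.eval z + φ (g.eval z)) = 0 := by rw [hz]; simp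
        rw [map_add] at this
        simpa using this
      exact sylMat_det_eq_zero n m (by omega) _ _
        ((Polynomial.natDegree_add_le _ _).trans (by simp [hgcdeg]))
        ((Polynomial.natDegree_add_le _ _).trans (by simp [hhcdeg]))
        w hAw hBw
end

section
/- Let f and g be relatively prime polynomials in the two real variables x and y with real coefficients, with deg f = n and deg g = m. Then the two algebraic curves f(x,y) = 0 and g(x,y) = 0 have at most m*n points in common; that is, the set {(x,y) ∈ ℝ^2 : f(x,y) = 0 and g(x,y) = 0} is finite of cardinality at most m*n. -/
open MvPolynomial Finset Module

set_option linter.unusedSectionVars false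
set_option linter.unusedVariables false
set_option maxHeartbeats 1000000
set_option synthInstance.maxHeartbeats 400000

namespace Stmt14Aux

noncomputable section

abbrev Vd (d : ℕ) : Submodule ℝ (MvPolynomial (Fin 2) ℝ) := restrictTotalDegree (Fin 2) ℝ d
abbrev evalPt (p : ℝ × ℝ) : MvPolynomial (Fin 2) ℝ →+* ℝ := eval ![p.1, p.2]

variable {σ R : Type*} [CommRing R] [IsDomain R]

lemma hc_top_ne_zero (p : MvPolynomial σ R) (hp : p ≠ 0) :
    homogeneousComponent p.totalDegree p ≠ 0 := by
  obtain ⟨s, hs, hdeg⟩ := Finset.exists_mem_eq_sup p.support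
    (support_nonempty.mpr hp) (fun s => s.sum fun _ e => e)
  intro h
  have hcoeff : coeff s (homogeneousComponent p.totalDegree p) = coeff s p := by
    rw [coeff_homogeneousComponent, if_pos]
    show (∑ i ∈ s.support, s i) = p.totalDegree
    rw [totalDegree, hdeg]; rfl
  rw [h, coeff_zero] at hcoeff
  exact mem_support_iff.mp hs hcoeff.symm

lemma hc_top_mul (p q : MvPolynomial σ R) :
    homogeneousComponent (p.totalDegree + q.totalDegree) (p * q) =
      homogeneousComponent p.totalDegree p * homogeneousComponent q.totalDegree q := by
  set dp := p.totalDegree with hdp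
  set dq := q.totalDegree with hdq
  conv_lhs => rw [← sum_homogeneousComponent p, ← sum_homogeneousComponent q]
  rw [Finset.sum_mul_sum, map_sum]
  rw [Finset.sum_congr rfl (fun i hi => map_sum _ _ _)]
  have step : ∀ i ∈ range (dp+1), ∀ j ∈ range (dq+1),
      homogeneousComponent (dp+dq) (homogeneousComponent i p * homogeneousComponent j q)
        = if i = dp ∧ j = dq then homogeneousComponent i p * homogeneousComponent j q else 0 := by
    intro i hi j hj
    have hmem : homogeneousComponent i p * homogeneousComponent j q ∈
        homogeneousSubmodule σ R (i + j) :=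
      by rw [mem_homogeneousSubmodule]; exact
        ((homogeneousComponent_isHomogeneous i p).mul (homogeneousComponent_isHomogeneous j q))
    rw [homogeneousComponent_of_mem hmem]
    simp only [mem_range] at hi hj
    exact if_congr (by omega) rfl rfl
  rw [Finset.sum_congr rfl (fun i hi => Finset.sum_congr rfl (fun j hj => step i hi j hj))]
  simp [Finset.sum_ite_eq, ite_and]

lemma totalDegree_mul_eq' {p q : MvPolynomial σ R} (hp : p ≠ 0) (hq : q ≠ 0) :
    (p * q).totalDegree = p.totalDegree + q.totalDegree := by
  refine le_antisymm (totalDegree_mul p q) ?_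
  by_contra h
  push_neg at h
  have h0 := homogeneousComponent_eq_zero (φ := p * q) (n := p.totalDegree + q.totalDegree) h
  rw [hc_top_mul] at h0
  exact mul_ne_zero (hc_top_ne_zero p hp) (hc_top_ne_zero q hq) h0



lemma tri_card (d : ℕ) :
    ((range (d+1)).biUnion (fun k => Finset.HasAntidiagonal.antidiagonal k)).card * 2 = (d+1)*(d+2) := by
  rw [Finset.card_biUnion]
  · have : ∀ k ∈ range (d+1), (Finset.HasAntidiagonal.antidiagonal k).card = k + 1 := by
      intro k _; exact Nat.card_antidiagonal k
    rw [Finset.sum_congr rfl this]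
    have h2 : (∑ k ∈ range (d+1), (k+1)) = ∑ k ∈ range (d+2), k := by
      rw [Finset.sum_range_succ' (fun k => k) (d+1)]
      simp
    rw [h2, Finset.sum_range_id_mul_two]
    simp [Nat.mul_comm]
  · intro a _ b _ hab
    simp only [Finset.disjoint_left]
    intro x hx hx'
    rw [Finset.HasAntidiagonal.mem_antidiagonal] at hx hx'
    exact hab (hx ▸ hx')

lemma finrank_Vd (d : ℕ) : finrank ℝ (Vd d) * 2 = (d+1)*(d+2) := by
  have hfin : ({n : Fin 2 →₀ ℕ | (n.sum fun _ e => e) ≤ d} : Set _).Finite := by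
    have := Finsupp.finite_of_degree_le (σ := Fin 2) d
    convert this using 2
    rfl
  haveI : Fintype ({n : Fin 2 →₀ ℕ | (n.sum fun _ e => e) ≤ d} : Set _) := hfin.fintype
  have b : Basis ({n : Fin 2 →₀ ℕ | (n.sum fun _ e => e) ≤ d} : Set _) ℝ (Vd d) :=
    basisRestrictSupport ℝ _
  rw [finrank_eq_card_basis b]
  have e1 : ({n : Fin 2 →₀ ℕ | (n.sum fun _ e => e) ≤ d} : Set _) ≃
      {x : ℕ × ℕ // x.1 + x.2 ≤ d} := by
    refine Equiv.subtypeEquiv ((Finsupp.equivFunOnFinite).trans (piFinTwoEquiv fun _ => ℕ)) ?_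
    intro s
    show (s.sum fun _ e => e) ≤ d ↔ s 0 + s 1 ≤ d
    rw [Finsupp.sum_fintype _ _ (fun _ => rfl), Fin.sum_univ_two]
  have e2 : {x : ℕ × ℕ // x.1 + x.2 ≤ d} ≃
      ((range (d+1)).biUnion (fun k => Finset.HasAntidiagonal.antidiagonal k) : Finset (ℕ × ℕ)) := by
    refine Equiv.subtypeEquivRight ?_
    intro x
    simp only [Finset.mem_coe, Finset.mem_biUnion, Finset.mem_range, Finset.HasAntidiagonal.mem_antidiagonal]
    constructor
    · intro h; exact ⟨x.1 + x.2, by omega, rfl⟩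
    · rintro ⟨k, hk, rfl⟩; omega
  rw [Fintype.card_congr (e1.trans e2), Fintype.card_coe]
  exact tri_card d

lemma finrank_identity (n m t : ℕ) :
    finrank ℝ (Vd (n+m+t)) + finrank ℝ (Vd t)
      = finrank ℝ (Vd (m+t)) + finrank ℝ (Vd (n+t)) + m * n := by
  have h1 := finrank_Vd (n+m+t)
  have h2 := finrank_Vd t
  have h3 := finrank_Vd (m+t)
  have h4 := finrank_Vd (n+t)
  nlinarith [h1, h2, h3, h4]




/-- evaluation linear map on `Vd d` at the points of `T`. -/
def EMap (d : ℕ) (T : Finset (ℝ × ℝ)) : Vd d →ₗ[ℝ] (T → ℝ) where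
  toFun q := fun t => evalPt t.1 q.1
  map_add' a b := by funext t; simp
  map_smul' c a := by funext t; simp [smul_eq_C_mul]

/-- the interpolation polynomial: vanishes at all points of `T.erase p`, not at `p`. -/
def interp (T : Finset (ℝ × ℝ)) (p : ℝ × ℝ) : MvPolynomial (Fin 2) ℝ :=
  ∏ q ∈ T.erase p, if q.1 ≠ p.1 then (X 0 - C q.1) else (X 1 - C q.2)

lemma interp_totalDegree (T : Finset (ℝ × ℝ)) (p : ℝ × ℝ) :
    (interp T p).totalDegree ≤ T.card := by
  refine le_trans (totalDegree_finset_prod _ _) ?_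
  refine le_trans (Finset.sum_le_card_nsmul _ _ 1 ?_) ?_
  · intro q _
    split_ifs
    all_goals refine le_trans (totalDegree_sub _ _) ?_
    all_goals simp [totalDegree_X, totalDegree_C]
  · simp only [smul_eq_mul, mul_one]
    exact le_trans (Finset.card_erase_le) le_rfl

lemma interp_eval_self (T : Finset (ℝ × ℝ)) (p : ℝ × ℝ) :
    evalPt p (interp T p) ≠ 0 := by
  rw [interp, map_prod]
  refine Finset.prod_ne_zero_iff.mpr ?_
  intro q hq
  rw [Finset.mem_erase] at hq
  split_ifs with h
  · simp only [map_sub, eval_X, eval_C]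
    simp only [Matrix.cons_val_zero]
    exact sub_ne_zero_of_ne (Ne.symm h)
  · push_neg at h
    have : q.2 ≠ p.2 := by
      intro h2; exact hq.1 (Prod.ext h h2)
    simp only [map_sub, eval_X, eval_C, Matrix.cons_val_one, Matrix.head_cons]
    exact sub_ne_zero_of_ne (Ne.symm this)

lemma interp_eval_other (T : Finset (ℝ × ℝ)) (p q : ℝ × ℝ) (hq : q ∈ T) (hqp : q ≠ p) :
    evalPt q (interp T p) = 0 := by
  rw [interp, map_prod]
  refine Finset.prod_eq_zero (Finset.mem_erase.mpr ⟨hqp, hq⟩) ?_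
  split_ifs with h
  · simp
  · simp

lemma EMap_surjective (d : ℕ) (T : Finset (ℝ × ℝ)) (hd : T.card ≤ d) :
    Function.Surjective (EMap d T) := by
  rw [← LinearMap.range_eq_top]
  have hb := (Pi.basisFun ℝ T).span_eq
  rw [← top_le_iff, ← hb, Submodule.span_le]
  rintro - ⟨t, rfl⟩
  have hmem : interp T t.1 ∈ Vd d := by
    rw [mem_restrictTotalDegree]
    exact le_trans (interp_totalDegree T t.1) hd
  have hval : evalPt t.1 (interp T t.1) ≠ 0 := interp_eval_self T t.1
  have : (Pi.basisFun ℝ T) t = (evalPt t.1 (interp T t.1))⁻¹ • EMap d T ⟨_, hmem⟩ := by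
    funext s
    simp only [Pi.basisFun_apply, Pi.smul_apply, smul_eq_mul]
    by_cases hst : s = t
    · subst hst
      simp only [EMap, LinearMap.coe_mk, AddHom.coe_mk]
      rw [inv_mul_cancel₀ hval]
      simp [Pi.single_eq_same]
    · have : evalPt s.1 (interp T t.1) = 0 := by
        refine interp_eval_other T t.1 s.1 s.2 ?_
        intro h; exact hst (Subtype.ext h)
      simp only [EMap, LinearMap.coe_mk, AddHom.coe_mk, this, mul_zero]
      rw [Pi.single_eq_of_ne hst]
  rw [SetLike.mem_coe, this]
  exact Submodule.smul_mem _ _ (LinearMap.mem_range_self _ _)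



/-- `(a, b) ↦ a * f + b * g` as a linear map `Vd d₁ × Vd d₂ → Vd d`. -/
def phiMap (f g : MvPolynomial (Fin 2) ℝ) (d1 d2 d : ℕ)
    (h1 : d1 + f.totalDegree ≤ d) (h2 : d2 + g.totalDegree ≤ d) :
    (Vd d1 × Vd d2) →ₗ[ℝ] Vd d where
  toFun ab := ⟨ab.1.1 * f + ab.2.1 * g, by
    rw [mem_restrictTotalDegree]
    refine le_trans (totalDegree_add _ _) (max_le ?_ ?_)
    · refine le_trans (totalDegree_mul _ _) (le_trans (add_le_add_left ?_ _) h1)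
      exact (mem_restrictTotalDegree _ _ _).mp ab.1.2
    · refine le_trans (totalDegree_mul _ _) (le_trans (add_le_add_left ?_ _) h2)
      exact (mem_restrictTotalDegree _ _ _).mp ab.2.2⟩
  map_add' a b := by
    apply Subtype.ext
    simp only [Submodule.coe_add, Prod.fst_add, Prod.snd_add]
    ring
  map_smul' c a := by
    apply Subtype.ext
    simp only [SetLike.val_smul, Prod.smul_fst, Prod.smul_snd, smul_eq_C_mul, RingHom.id_apply]
    ring

/-- `c ↦ (c * g, -(c * f))`, a linear map `Vd t → Vd d1 × Vd d2`. -/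
def psiMap (f g : MvPolynomial (Fin 2) ℝ) (t d1 d2 : ℕ)
    (h1 : t + g.totalDegree ≤ d1) (h2 : t + f.totalDegree ≤ d2) :
    Vd t →ₗ[ℝ] (Vd d1 × Vd d2) where
  toFun c := ⟨⟨c.1 * g, by
      rw [mem_restrictTotalDegree]
      refine le_trans (totalDegree_mul _ _) (le_trans (add_le_add_left ?_ _) h1)
      exact (mem_restrictTotalDegree _ _ _).mp c.2⟩,
    ⟨-(c.1 * f), by
      rw [mem_restrictTotalDegree, totalDegree_neg]
      refine le_trans (totalDegree_mul _ _) (le_trans (add_le_add_left ?_ _) h2)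
      exact (mem_restrictTotalDegree _ _ _).mp c.2⟩⟩
  map_add' a b := by
    refine Prod.ext (Subtype.ext ?_) (Subtype.ext ?_) <;>
      simp only [Submodule.coe_add, Prod.fst_add, Prod.snd_add] <;> ring
  map_smul' c a := by
    refine Prod.ext (Subtype.ext ?_) (Subtype.ext ?_) <;>
      simp only [SetLike.val_smul, Prod.smul_fst, Prod.smul_snd, smul_eq_C_mul,
        RingHom.id_apply] <;> ring

lemma totalDegree_mul_eq'' {p q : MvPolynomial (Fin 2) ℝ} (hp : p ≠ 0) (hq : q ≠ 0) :
    (p * q).totalDegree = p.totalDegree + q.totalDegree := totalDegree_mul_eq' hp hq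

lemma psi_injective (f g : MvPolynomial (Fin 2) ℝ) (hg : g ≠ 0) (t d1 d2 : ℕ)
    (h1 : t + g.totalDegree ≤ d1) (h2 : t + f.totalDegree ≤ d2) :
    Function.Injective (psiMap f g t d1 d2 h1 h2) := by
  intro a b hab
  apply Subtype.ext
  have := congrArg (fun x => (x.1 : MvPolynomial (Fin 2) ℝ)) hab
  simp only [psiMap, LinearMap.coe_mk, AddHom.coe_mk] at this
  exact mul_right_cancel₀ hg this

lemma ker_phi (f g : MvPolynomial (Fin 2) ℝ) (hf : f ≠ 0) (hg : g ≠ 0)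
    (hcop : IsRelPrime f g) (t d : ℕ)
    (h1 : (t + g.totalDegree) + f.totalDegree ≤ d) (h2 : (t + f.totalDegree) + g.totalDegree ≤ d) :
    LinearMap.ker (phiMap f g (t + g.totalDegree) (t + f.totalDegree) d h1 h2)
      = LinearMap.range (psiMap f g t (t + g.totalDegree) (t + f.totalDegree) le_rfl le_rfl) := by
  apply le_antisymm
  · rintro ⟨a, b⟩ hab
    rw [LinearMap.mem_ker] at hab
    have habv : (a : MvPolynomial (Fin 2) ℝ) * f + (b : MvPolynomial (Fin 2) ℝ) * g = 0 :=
      congrArg Subtype.val hab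
    -- g divides a
    have hdvd : g ∣ (a : MvPolynomial (Fin 2) ℝ) * f := by
      refine ⟨-(b : MvPolynomial (Fin 2) ℝ), ?_⟩
      linear_combination habv
    have hga : g ∣ (a : MvPolynomial (Fin 2) ℝ) := hcop.symm.dvd_of_dvd_mul_right hdvd
    obtain ⟨c, hc⟩ := hga
    have hcdeg : c.totalDegree ≤ t := by
      rcases eq_or_ne c 0 with rfl | hc0
      · simp
      have : (a : MvPolynomial (Fin 2) ℝ).totalDegree ≤ t + g.totalDegree :=
        (mem_restrictTotalDegree _ _ _).mp a.2
      rw [hc, totalDegree_mul_eq'' hg hc0] at this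
      omega
    refine ⟨⟨c, (mem_restrictTotalDegree _ _ _).mpr hcdeg⟩, ?_⟩
    have hb : (b : MvPolynomial (Fin 2) ℝ) = -(c * f) := by
      have hg' : g * ((b : MvPolynomial (Fin 2) ℝ) + c * f) = 0 := by
        linear_combination habv - f * hc
      rcases mul_eq_zero.mp hg' with h | h
      · exact absurd h hg
      · linear_combination h
    refine Prod.ext (Subtype.ext ?_) (Subtype.ext ?_)
    · simpa [psiMap, mul_comm] using hc.symm
    · simpa [psiMap] using hb.symm
  · rintro - ⟨c, rfl⟩
    rw [LinearMap.mem_ker]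
    apply Subtype.ext
    simp only [phiMap, psiMap, LinearMap.coe_mk, AddHom.coe_mk, ZeroMemClass.coe_zero]
    ring

lemma key (f g : MvPolynomial (Fin 2) ℝ) (hf : f ≠ 0) (hg : g ≠ 0)
    (hcop : IsRelPrime f g) (T : Finset (ℝ × ℝ))
    (hT : ∀ p ∈ T, evalPt p f = 0 ∧ evalPt p g = 0) :
    T.card ≤ g.totalDegree * f.totalDegree := by
  set n := f.totalDegree with hn
  set m := g.totalDegree with hm
  set t := T.card with ht
  set d := t + m + n with hd
  have h1 : (t + m) + n ≤ d := le_rfl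
  have h2 : (t + n) + m ≤ d := by omega
  set φ := phiMap f g (t + m) (t + n) d h1 h2 with hφ
  set ψ := psiMap f g t (t + m) (t + n) le_rfl le_rfl with hψ
  set E := EMap d T with hE
  -- range φ ≤ ker E
  have hle : LinearMap.range φ ≤ LinearMap.ker E := by
    rintro - ⟨⟨a, b⟩, rfl⟩
    rw [LinearMap.mem_ker]
    funext s
    have hs := hT s.1 s.2
    show evalPt s.1 ((a : MvPolynomial (Fin 2) ℝ) * f + (b : MvPolynomial (Fin 2) ℝ) * g) = 0
    rw [map_add, map_mul, map_mul, hs.1, hs.2, mul_zero, mul_zero, add_zero]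
  -- dimension bookkeeping
  have hrn1 : finrank ℝ (LinearMap.range φ) + finrank ℝ (LinearMap.ker φ)
      = finrank ℝ (Vd (t+m)) + finrank ℝ (Vd (t+n)) := by
    rw [LinearMap.finrank_range_add_finrank_ker φ, Module.finrank_prod]
  have hker : finrank ℝ (LinearMap.ker φ) = finrank ℝ (Vd t) := by
    rw [hφ, ker_phi f g hf hg hcop t d h1 h2]
    exact LinearMap.finrank_range_of_inj (psi_injective f g hg t (t+m) (t+n) le_rfl le_rfl)
  have hsurj : Function.Surjective E := EMap_surjective d T (by omega)
  have hrn2 : t + finrank ℝ (LinearMap.ker E) = finrank ℝ (Vd d) := by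
    have := LinearMap.finrank_range_add_finrank_ker E
    rw [LinearMap.range_eq_top.mpr hsurj, finrank_top] at this
    rw [← this, Module.finrank_fintype_fun_eq_card, Fintype.card_coe]
  have hmono : finrank ℝ (LinearMap.range φ) ≤ finrank ℝ (LinearMap.ker E) :=
    Submodule.finrank_mono hle
  have hc1 := finrank_Vd (t+m)
  have hc2 := finrank_Vd (t+n)
  have hc3 := finrank_Vd t
  have hc4 := finrank_Vd d
  rw [hd] at hc4
  nlinarith [hrn1, hker, hrn2, hmono, hc1, hc2, hc3, hc4]

end
end Stmt14Aux

/-- Bezout's theorem in the plane: two relatively prime real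
polynomial curves `f = 0` and `g = 0` in the plane, of total degrees `n` and
`m`, meet in at most `m * n` points. -/
theorem stmt_14 (f g : MvPolynomial (Fin 2) ℝ) (n m : ℕ)
    (hf : f.totalDegree = n) (hg : g.totalDegree = m)
    (hcop : IsRelPrime f g) :
    {p : ℝ × ℝ | MvPolynomial.eval ![p.1, p.2] f = 0 ∧
        MvPolynomial.eval ![p.1, p.2] g = 0}.Finite ∧
      {p : ℝ × ℝ | MvPolynomial.eval ![p.1, p.2] f = 0 ∧
        MvPolynomial.eval ![p.1, p.2] g = 0}.ncard ≤ m * n := by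
  classical
  set S := {p : ℝ × ℝ | MvPolynomial.eval ![p.1, p.2] f = 0 ∧
      MvPolynomial.eval ![p.1, p.2] g = 0} with hS
  by_cases hf0 : f = 0
  · have hu : IsUnit g := hcop (hf0 ▸ dvd_zero g) dvd_rfl
    have hempty : S = ∅ := by
      ext p
      simp only [hS, Set.mem_setOf_eq, Set.mem_empty_iff_false, iff_false, not_and]
      intro _ h2
      exact not_isUnit_zero (h2 ▸ hu.map (MvPolynomial.eval ![p.1, p.2]))
    rw [hempty]
    simp
  by_cases hg0 : g = 0
  · have hu : IsUnit f := hcop dvd_rfl (hg0 ▸ dvd_zero f)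
    have hempty : S = ∅ := by
      ext p
      simp only [hS, Set.mem_setOf_eq, Set.mem_empty_iff_false, iff_false, not_and]
      intro h1
      exact absurd (h1 ▸ hu.map (MvPolynomial.eval ![p.1, p.2])) not_isUnit_zero
    rw [hempty]
    simp
  have key' : ∀ T : Finset (ℝ × ℝ), ↑T ⊆ S → T.card ≤ m * n := by
    intro T hTs
    have := Stmt14Aux.key f g hf0 hg0 hcop T (fun p hp => hTs hp)
    rwa [hf, hg] at this
  have hfin : S.Finite := by
    by_contra h
    obtain ⟨T, hsub, hcard⟩ := Set.Infinite.exists_subset_card_eq h (m * n + 1)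
    have := key' T hsub
    omega
  refine ⟨hfin, ?_⟩
  rw [Set.ncard_eq_toFinset_card S hfin]
  exact key' hfin.toFinset (by simp)
end
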